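/- arXiv:2509.11130 — 5 statements merged into one kernel-verified Lean document; each statement's English description precedes it below -/
import Mathlib

section
/- Let (X,T) be a nonautonomous dynamical system (compact metric spaces X_k and continuous maps T_k : X_k → X_{k+1}) that is expansive with expansive constant δ > 0. Then for every 0 < ε < δ and every x ∈ X_0, the diameters of the Bowen balls B_n^T(x,ε) and of the closed Bowen balls tend to 0 as n → ∞. -/
open Filter

/-- If a nonautonomous dynamical system `(X,T)` on compact metric spaces is expansive with
expansive constant `δ > 0`, then for every `0 < ε < δ` and every `x ∈ X_0`, the diameters of
the Bowen balls `B_n^T(x,ε)` (and of the closed Bowen balls) tend to `0` as `n → ∞`. -/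
theorem stmt9 (X : ℕ → Type*) [∀ k, MetricSpace (X k)] [∀ k, CompactSpace (X k)]
    (T : ∀ k, X k → X (k + 1)) (hT : ∀ k, Continuous (T k))
    (Titer : ∀ j : ℕ, X 0 → X j) (hT0 : Titer 0 = id)
    (hTs : ∀ j x, Titer (j + 1) x = T j (Titer j x))
    (δ : ℝ) (hδ : 0 < δ)
    (hexp : ∀ x y : X 0, x ≠ y → ∃ j : ℕ, δ < dist (Titer j x) (Titer j y))
    (ε : ℝ) (hε0 : 0 < ε) (hεδ : ε < δ) (x : X 0) :
    Tendsto (fun n : ℕ =>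
        Metric.diam {y : X 0 | ∀ j < n, dist (Titer j x) (Titer j y) < ε}) atTop (nhds 0) ∧
    Tendsto (fun n : ℕ =>
        Metric.diam {y : X 0 | ∀ j < n, dist (Titer j x) (Titer j y) ≤ ε}) atTop (nhds 0) := by
  have hcont : ∀ j, Continuous (Titer j) := by
    intro j
    induction j with
    | zero => rw [hT0]; exact continuous_id
    | succ j ih =>
      have : Titer (j + 1) = fun y => T j (Titer j y) := funext (hTs j)
      rw [this]; exact (hT j).comp ih
  set C : ℕ → Set (X 0) := fun n => {y | ∀ j < n, dist (Titer j x) (Titer j y) ≤ ε} with hC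
  have hclosed : ∀ n, IsClosed (C n) := by
    intro n
    have : C n = ⋂ j ∈ Finset.range n, {y | dist (Titer j x) (Titer j y) ≤ ε} := by
      ext y; simp [hC]
    rw [this]
    exact isClosed_biInter fun j _ =>
      isClosed_le (continuous_const.dist (hcont j)) continuous_const
  have hanti : ∀ m n, m ≤ n → C n ⊆ C m := fun m n h y hy j hj => hy j (lt_of_lt_of_le hj h)
  -- key: for every r > 0 there is N with C N ⊆ ball x r
  have key : ∀ r : ℝ, 0 < r → ∃ N, C N ⊆ Metric.ball x r := by
    intro r hr
    by_contra h
    push_neg at h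
    set K : ℕ → Set (X 0) := fun n => C n ∩ (Metric.ball x r)ᶜ with hK
    have hKne : ∀ n, (K n).Nonempty := by
      intro n
      obtain ⟨y, hy1, hy2⟩ := Set.not_subset.1 (h n)
      exact ⟨y, hy1, hy2⟩
    have hKcl : ∀ n, IsClosed (K n) := fun n =>
      (hclosed n).inter Metric.isOpen_ball.isClosed_compl
    have hKsub : ∀ n, K (n + 1) ⊆ K n := fun n =>
      Set.inter_subset_inter_left _ (hanti n (n + 1) (Nat.le_succ n))
    have hK0 : IsCompact (K 0) := (hKcl 0).isCompact
    obtain ⟨y, hy⟩ := IsCompact.nonempty_iInter_of_sequence_nonempty_isCompact_isClosed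
      K hKsub hKne hK0 hKcl
    simp only [Set.mem_iInter, hK, Set.mem_inter_iff] at hy
    have hyC : ∀ n, y ∈ C n := fun n => (hy n).1
    have hyx : y ≠ x := by
      intro hyx
      have := (hy 0).2
      apply this
      rw [hyx]
      exact Metric.mem_ball_self hr
    obtain ⟨j, hj⟩ := hexp x y (Ne.symm hyx)
    have := hyC (j + 1) j (Nat.lt_succ_self j)
    linarith
  have hbdd : ∀ s : Set (X 0), Bornology.IsBounded s := fun s =>
    (isCompact_univ.isBounded).subset (Set.subset_univ s)
  have hdiam : ∀ η : ℝ, 0 < η → ∃ N, ∀ n ≥ N, Metric.diam (C n) < η := by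
    intro η hη
    obtain ⟨N, hN⟩ := key (η / 3) (by linarith)
    refine ⟨N, fun n hn => ?_⟩
    have h1 : C n ⊆ Metric.ball x (η / 3) := (hanti N n hn).trans hN
    calc Metric.diam (C n) ≤ Metric.diam (Metric.ball x (η / 3)) :=
          Metric.diam_mono h1 Metric.isBounded_ball
      _ ≤ 2 * (η / 3) := Metric.diam_ball (by linarith)
      _ < η := by linarith
  have hC2 : Tendsto (fun n : ℕ => Metric.diam (C n)) atTop (nhds 0) := by
    rw [Metric.tendsto_atTop]
    intro η hη
    obtain ⟨N, hN⟩ := hdiam η hη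
    refine ⟨N, fun n hn => ?_⟩
    rw [Real.dist_eq, sub_zero, abs_of_nonneg Metric.diam_nonneg]
    exact hN n hn
  refine ⟨?_, hC2⟩
  have hle : ∀ n : ℕ,
      Metric.diam {y : X 0 | ∀ j < n, dist (Titer j x) (Titer j y) < ε} ≤ Metric.diam (C n) := by
    intro n
    apply Metric.diam_mono _ (hbdd _)
    intro y hy j hj
    exact (hy j hj).le
  exact squeeze_zero (fun n => Metric.diam_nonneg) hle hC2
end

section
/- Let (X,T) be an expansive nonautonomous dynamical system with expansive constant δ > 0, and let A = (A_k)_{k≥0} be a sequence of finite covers of X_k with sup_k sup_{A ∈ A_k} diam(A) ≤ δ. Then diam(∨_n^T A) → 0 as n → ∞, where ∨_n^T A is the collection of all sets ∩_{j=0}^{n-1} (T^j)^{-1} A_j with A_j ∈ A_j. -/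
/-- Let `(X,T)` be an expansive NDS with expansive constant `δ > 0`, and `A = (A_k)` a
sequence of finite covers of `X_k` whose members all have diameter `≤ δ`. Then
`diam(∨_n^T A) → 0` as `n → ∞`, i.e. for every `ε > 0` there is `N` such that for all
`n ≥ N` every member `⋂_{j<n} (T^j)⁻¹ A_j` of the dynamical refinement has diameter `≤ ε`. -/
theorem stmt10 (X : ℕ → Type*) [∀ k, MetricSpace (X k)] [∀ k, CompactSpace (X k)]
    (T : ∀ k, X k → X (k + 1)) (hT : ∀ k, Continuous (T k))
    (Titer : ∀ j : ℕ, X 0 → X j) (hT0 : Titer 0 = id)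
    (hTs : ∀ j x, Titer (j + 1) x = T j (Titer j x))
    (δ : ℝ) (hδ : 0 < δ)
    (hexp : ∀ x y : X 0, x ≠ y → ∃ j : ℕ, δ < dist (Titer j x) (Titer j y))
    (A : ∀ k, Set (Set (X k))) (hAfin : ∀ k, (A k).Finite)
    (hAcov : ∀ k, ⋃₀ A k = Set.univ)
    (hAdiam : ∀ k, ∀ a ∈ A k, Metric.diam a ≤ δ) :
    ∀ ε > (0 : ℝ), ∃ N : ℕ, ∀ n ≥ N, ∀ U : ∀ j : ℕ, Set (X j), (∀ j, U j ∈ A j) →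
      Metric.diam (⋂ j ∈ Finset.range n, Titer j ⁻¹' U j) ≤ ε := by
  have hcont : ∀ j, Continuous (Titer j) := by
    intro j
    induction j with
    | zero => rw [hT0]; exact continuous_id
    | succ j ih =>
      have h : Titer (j + 1) = T j ∘ Titer j := funext (hTs j)
      rw [h]; exact (hT j).comp ih
  intro ε hε
  suffices h : ∃ N : ℕ, ∀ U : ∀ j : ℕ, Set (X j), (∀ j, U j ∈ A j) →
      Metric.diam (⋂ j ∈ Finset.range N, Titer j ⁻¹' U j) ≤ ε by
    obtain ⟨N, hN⟩ := h
    refine ⟨N, fun n hn U hU => ?_⟩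
    refine le_trans (Metric.diam_mono ?_
      (isCompact_univ.isBounded.subset (Set.subset_univ _))) (hN U hU)
    intro z hz
    simp only [Set.mem_iInter] at hz ⊢
    exact fun j hj => hz j (Finset.mem_range.mpr
      (lt_of_lt_of_le (Finset.mem_range.mp hj) hn))
  by_contra hcon
  push_neg at hcon
  have key : ∀ N : ℕ, ∃ U : ∀ j : ℕ, Set (X j), (∀ j, U j ∈ A j) ∧
      ∃ x y : X 0, (x ∈ ⋂ j ∈ Finset.range N, Titer j ⁻¹' U j) ∧
        (y ∈ ⋂ j ∈ Finset.range N, Titer j ⁻¹' U j) ∧ ε < dist x y := by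
    intro N
    obtain ⟨U, hU, hdiam⟩ := hcon N
    refine ⟨U, hU, ?_⟩
    by_contra hpts
    push_neg at hpts
    exact hdiam.not_ge (Metric.diam_le_of_forall_dist_le hε.le
      (fun x hx y hy => hpts x y hx hy))
  choose U hU x y hx hy hdist using key
  obtain ⟨a, -, φ, hφ, hxa⟩ := isCompact_univ.tendsto_subseq
    (fun N => Set.mem_univ (x N))
  obtain ⟨b, -, ψ, hψ, hyb⟩ := isCompact_univ.tendsto_subseq
    (fun N => Set.mem_univ ((y ∘ φ) N))
  set σ : ℕ → ℕ := φ ∘ ψ with hσ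
  have hσmono : StrictMono σ := hφ.comp hψ
  have hxσ : Filter.Tendsto (fun n => x (σ n)) Filter.atTop (nhds a) :=
    hxa.comp hψ.tendsto_atTop
  have hyσ : Filter.Tendsto (fun n => y (σ n)) Filter.atTop (nhds b) := hyb
  have hab : ε ≤ dist a b := by
    refine ge_of_tendsto (hxσ.dist hyσ) ?_
    exact Filter.Eventually.of_forall fun n => (hdist (σ n)).le
  have hne : a ≠ b := by
    intro h
    rw [h, dist_self] at hab
    exact hε.not_ge hab
  obtain ⟨j, hj⟩ := hexp a b hne
  have hjle : dist (Titer j a) (Titer j b) ≤ δ := by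
    refine le_of_tendsto
      (((hcont j).tendsto a).comp hxσ |>.dist (((hcont j).tendsto b).comp hyσ)) ?_
    filter_upwards [Filter.eventually_ge_atTop (j + 1)] with n hn
    have hjn : j ∈ Finset.range (σ n) :=
      Finset.mem_range.mpr (lt_of_lt_of_le (Nat.lt_succ_self j)
        (le_trans hn (hσmono.le_apply)))
    have h1 : Titer j (x (σ n)) ∈ U (σ n) j := by
      have := hx (σ n); simp only [Set.mem_iInter] at this; exact this j hjn
    have h2 : Titer j (y (σ n)) ∈ U (σ n) j := by
      have := hy (σ n); simp only [Set.mem_iInter] at this; exact this j hjn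
    calc dist (Titer j (x (σ n))) (Titer j (y (σ n)))
        ≤ Metric.diam (U (σ n) j) := Metric.dist_le_diam_of_mem
          (isCompact_univ.isBounded.subset (Set.subset_univ _)) h1 h2
      _ ≤ δ := hAdiam j _ (hU (σ n) j)
  exact hj.not_ge hjle
end

section
/- Let (X,T) be a nonautonomous dynamical system and U = (U_k)_{k≥0} a generator for T (a sequence of finite open covers with a common Lebesgue number such that ∩_{j≥0} (T^j)^{-1} cl(U_j) contains at most one point for every choice U_j ∈ U_j). Then the union over n ≥ 0 of the families ∨_n^T U = {∩_{j=0}^{n-1}(T^j)^{-1}U_j : U_j ∈ U_j} is a base for the topology of X_0; in particular, for every ε > 0 there exists N with diam(∨_N^T U) ≤ ε. -/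
/-- If `U = (U_k)` is a generator for `T` (a sequence of finite open covers with a common
Lebesgue number `δ > 0` such that `⋂_j (T^j)⁻¹ cl(U_j)` contains at most one point for each
choice `U_j ∈ U_j`), then `⋃_{n≥0} ∨_n^T U` is a base for the topology of `X_0`; in
particular, for every `ε > 0` there exists `N` with `diam(∨_N^T U) ≤ ε`. -/
theorem stmt11 (X : ℕ → Type*) [∀ k, MetricSpace (X k)] [∀ k, CompactSpace (X k)]
    (T : ∀ k, X k → X (k + 1)) (hT : ∀ k, Continuous (T k))
    (Titer : ∀ j : ℕ, X 0 → X j) (hT0 : Titer 0 = id)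
    (hTs : ∀ j x, Titer (j + 1) x = T j (Titer j x))
    (U : ∀ k, Set (Set (X k))) (hUfin : ∀ k, (U k).Finite)
    (hUopen : ∀ k, ∀ u ∈ U k, IsOpen u) (hUcov : ∀ k, ⋃₀ U k = Set.univ)
    (δ : ℝ) (hδ : 0 < δ) (hleb : ∀ k (x : X k), ∃ u ∈ U k, Metric.ball x δ ⊆ u)
    (hgen : ∀ s : ∀ k, Set (X k), (∀ k, s k ∈ U k) →
      Set.Subsingleton (⋂ j : ℕ, Titer j ⁻¹' closure (s j))) :
    TopologicalSpace.IsTopologicalBasis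
        {V : Set (X 0) | ∃ (n : ℕ) (s : ∀ j : ℕ, Set (X j)), (∀ j, s j ∈ U j) ∧
          V = ⋂ j ∈ Finset.range n, Titer j ⁻¹' s j} ∧
      ∀ ε > (0 : ℝ), ∃ N : ℕ, ∀ s : ∀ j : ℕ, Set (X j), (∀ j, s j ∈ U j) →
        Metric.diam (⋂ j ∈ Finset.range N, Titer j ⁻¹' s j) ≤ ε := by
  have hTiter : ∀ j, Continuous (Titer j) := by
    intro j
    induction j with
    | zero => rw [hT0]; exact continuous_id
    | succ j ih =>
      have h : Titer (j + 1) = T j ∘ Titer j := funext fun x => hTs j x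
      rw [h]; exact (hT j).comp ih
  -- Key diameter claim
  have key : ∀ ε > (0 : ℝ), ∃ N : ℕ, ∀ s : ∀ j : ℕ, Set (X j), (∀ j, s j ∈ U j) →
      Metric.diam (⋂ j ∈ Finset.range N, Titer j ⁻¹' s j) ≤ ε := by
    intro ε hε
    by_contra hcon
    push_neg at hcon
    choose s hsU hdiam using hcon
    have hxy : ∀ N : ℕ, ∃ x y : X 0,
        x ∈ (⋂ j ∈ Finset.range N, Titer j ⁻¹' s N j) ∧
        y ∈ (⋂ j ∈ Finset.range N, Titer j ⁻¹' s N j) ∧ ε < dist x y := by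
      intro N
      by_contra hc
      push_neg at hc
      exact absurd (Metric.diam_le_of_forall_dist_le hε.le
        fun x hx y hy => hc x y hx hy) (not_le.2 (hdiam N))
    choose x y hxmem hymem hdist using hxy
    set F : Ultrafilter ℕ := Filter.hyperfilter ℕ with hF
    -- choose limit cover elements
    have hchoice : ∀ j : ℕ, ∃ a ∈ U j, ∀ᶠ N in (F : Filter ℕ), s N j = a := by
      intro j
      have hmem : U j ∈ F.map (fun N => s N j) := by
        simp only [Ultrafilter.mem_map]
        exact Filter.univ_mem' fun N => hsU N j
      obtain ⟨a, haU, hpure⟩ := Ultrafilter.eq_pure_of_finite_mem (hUfin j) hmem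
      refine ⟨a, haU, ?_⟩
      have h1 : {a} ∈ (pure a : Ultrafilter (Set (X j))) := Ultrafilter.mem_pure.2 rfl
      rw [← hpure, Ultrafilter.mem_map] at h1
      exact h1
    choose t htU hteq using hchoice
    -- limits of x and y along F
    obtain ⟨xl, -, hxl⟩ := isCompact_univ.ultrafilter_le_nhds (F.map x)
      (by simp [Filter.le_principal_iff])
    obtain ⟨yl, -, hyl⟩ := isCompact_univ.ultrafilter_le_nhds (F.map y)
      (by simp [Filter.le_principal_iff])
    have htx : Filter.Tendsto x (F : Filter ℕ) (nhds xl) := hxl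
    have hty : Filter.Tendsto y (F : Filter ℕ) (nhds yl) := hyl
    have hne : xl ≠ yl := by
      have hd : Filter.Tendsto (fun N => dist (x N) (y N)) (F : Filter ℕ)
          (nhds (dist xl yl)) := htx.dist hty
      have hge : ε ≤ dist xl yl :=
        ge_of_tendsto hd (Filter.Eventually.of_forall fun N => (hdist N).le)
      intro h
      rw [h, dist_self] at hge
      exact absurd hge (not_le.2 hε)
    -- both limits lie in the generator intersection
    have hkey : ∀ (z : ℕ → X 0) (zl : X 0),
        Filter.Tendsto z (F : Filter ℕ) (nhds zl) →
        (∀ N, z N ∈ ⋂ j ∈ Finset.range N, Titer j ⁻¹' s N j) →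
        zl ∈ ⋂ j : ℕ, Titer j ⁻¹' closure (t j) := by
      intro z zl hz hzmem
      refine Set.mem_iInter.2 fun j => ?_
      have hgt : ∀ᶠ N in (F : Filter ℕ), j < N := by
        have : ∀ᶠ N in Filter.cofinite, j < N := by
          rw [Nat.cofinite_eq_atTop]
          exact Filter.eventually_gt_atTop j
        exact this.filter_mono (Filter.hyperfilter_le_cofinite)
      have hev : ∀ᶠ N in (F : Filter ℕ), Titer j (z N) ∈ t j := by
        filter_upwards [hgt, hteq j] with N hN heq
        have := hzmem N
        rw [Set.mem_iInter₂] at this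
        have hm := this j (Finset.mem_range.2 hN)
        rwa [heq] at hm
      exact mem_closure_of_tendsto (((hTiter j).tendsto zl).comp hz) hev
    have hxlmem := hkey x xl htx hxmem
    have hylmem := hkey y yl hty hymem
    exact hne (hgen t htU hxlmem hylmem)
  refine ⟨TopologicalSpace.isTopologicalBasis_of_isOpen_of_nhds ?_ ?_, key⟩
  · rintro V ⟨n, s, hsU, rfl⟩
    exact isOpen_biInter_finset fun j _ =>
      (hUopen j (s j) (hsU j)).preimage (hTiter j)
  · intro a V haV hVopen
    obtain ⟨ε, hε, hball⟩ := Metric.isOpen_iff.1 hVopen a haV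
    obtain ⟨N, hN⟩ := key (ε / 2) (half_pos hε)
    have hchoice : ∀ j : ℕ, ∃ u ∈ U j, Titer j a ∈ u := by
      intro j
      obtain ⟨u, huU, hu⟩ := hleb j (Titer j a)
      exact ⟨u, huU, hu (Metric.mem_ball_self hδ)⟩
    choose s hsU hsa using hchoice
    refine ⟨⋂ j ∈ Finset.range N, Titer j ⁻¹' s j, ⟨N, s, hsU, rfl⟩, ?_, ?_⟩
    · exact Set.mem_iInter₂.2 fun j _ => hsa j
    · intro b hb
      apply hball
      have hbd : Bornology.IsBounded (⋂ j ∈ Finset.range N, Titer j ⁻¹' s j) :=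
        (isCompact_univ.isBounded).subset (Set.subset_univ _)
      have : dist b a ≤ ε / 2 :=
        le_trans (Metric.dist_le_diam_of_mem hbd hb
          (Set.mem_iInter₂.2 fun j _ => hsa j)) (hN s hsU)
      exact lt_of_le_of_lt this (half_lt_self hε)
end

section
/- If (X,T) is an expansive NDS with expansive constant δ > 0, then for every 0 < ε < δ/4 the sequence of covers B_k = {B(x_i^{(k)}, δ/2)}_{i=1}^{m_k}, where the finite set {x_1^{(k)},…,x_{m_k}^{(k)}} is chosen so that the balls of radius δ/2 - ε cover X_k, is a generator for T with Lebesgue number ε. -/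
/-- If `(X,T)` is an expansive NDS with expansive constant `δ > 0`, then for every
`0 < ε < δ/4`: whenever for each `k` a finite set `c_k ⊆ X_k` is chosen so that the balls
of radius `δ/2 - ε` centered in `c_k` cover `X_k`, the sequence of covers
`B_k = {B(x, δ/2) : x ∈ c_k}` is a generator for `T` with Lebesgue number `ε`
(each `B_k` is a finite open cover, `ε` is a common Lebesgue number, and each choice of
closures has preimage intersection containing at most one point). -/
theorem stmt13 (X : ℕ → Type*) [∀ k, MetricSpace (X k)] [∀ k, CompactSpace (X k)]
    (T : ∀ k, X k → X (k + 1)) (hT : ∀ k, Continuous (T k))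
    (Titer : ∀ j : ℕ, X 0 → X j) (hT0 : Titer 0 = id)
    (hTs : ∀ j x, Titer (j + 1) x = T j (Titer j x))
    (δ : ℝ) (hδ : 0 < δ)
    (hexp : ∀ x y : X 0, x ≠ y → ∃ j : ℕ, δ < dist (Titer j x) (Titer j y))
    (ε : ℝ) (hε0 : 0 < ε) (hεδ : ε < δ / 4)
    (c : ∀ k, Finset (X k))
    (hc : ∀ k (x : X k), ∃ y ∈ c k, dist x y < δ / 2 - ε) :
    (∀ k, ((fun y => Metric.ball y (δ / 2)) '' (c k : Set (X k))).Finite ∧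
        (∀ u ∈ (fun y => Metric.ball y (δ / 2)) '' (c k : Set (X k)), IsOpen u) ∧
        ⋃₀ ((fun y => Metric.ball y (δ / 2)) '' (c k : Set (X k))) = Set.univ) ∧
      (∀ k (x : X k), ∃ u ∈ (fun y => Metric.ball y (δ / 2)) '' (c k : Set (X k)),
        Metric.ball x ε ⊆ u) ∧
      (∀ s : ∀ k, Set (X k),
        (∀ k, s k ∈ (fun y => Metric.ball y (δ / 2)) '' (c k : Set (X k))) →
        Set.Subsingleton (⋂ j : ℕ, Titer j ⁻¹' closure (s j))) := by
  refine ⟨fun k => ⟨(c k).finite_toSet.image _, ?_, ?_⟩, ?_, ?_⟩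
  · rintro u ⟨y, -, rfl⟩; exact Metric.isOpen_ball
  · ext x
    simp only [Set.mem_sUnion, Set.mem_image, Set.mem_univ, iff_true]
    obtain ⟨y, hy, hxy⟩ := hc k x
    exact ⟨_, ⟨y, hy, rfl⟩, Metric.mem_ball.2 (by linarith)⟩
  · intro k x
    obtain ⟨y, hy, hxy⟩ := hc k x
    refine ⟨_, ⟨y, hy, rfl⟩, fun z hz => ?_⟩
    have := Metric.mem_ball.1 hz
    exact Metric.mem_ball.2 (by calc dist z y ≤ dist z x + dist x y := dist_triangle _ _ _
      _ < δ / 2 := by linarith)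
  · intro s hs x hx y hy
    by_contra hne
    obtain ⟨j, hj⟩ := hexp x y hne
    obtain ⟨p, -, hp⟩ := hs j
    have hxj : Titer j x ∈ closure (s j) := by
      simpa using Set.mem_iInter.1 hx j
    have hyj : Titer j y ∈ closure (s j) := by
      simpa using Set.mem_iInter.1 hy j
    rw [← hp] at hxj hyj
    have hcb : closure (Metric.ball p (δ / 2)) ⊆ Metric.closedBall p (δ / 2) :=
      Metric.closure_ball_subset_closedBall
    have h1 := Metric.mem_closedBall.1 (hcb hxj)
    have h2 := Metric.mem_closedBall.1 (hcb hyj)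
    have := dist_triangle_right (Titer j x) (Titer j y) p
    linarith
end

section
/- (Rank uniformization covering lemma, lower bound form) Let U be a finite disjoint cover of Σ_0^∞(m) by cylinders, with minimal rank n_min and maximal rank n_max. Suppose f = (f_k) is a sequence of functions with f_k(ω) depending only on the first coordinate ω_k. Then for every s ∈ ℝ there exists an integer n* with n_min ≤ n* ≤ n_max such that ∑_{u∈U} exp(-n(u)s + sup_{ω∈[u]} S_{n(u)}^σ f(ω)) ≥ ∑_{u∈Σ_0^{n*}} exp(-n* s + sup_{ω∈[u]} S_{n*}^σ f(ω)), where n(u) is the rank of the cylinder [u] and Σ_0^{n*} denotes all words of length n* starting at index 0. -/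
open Finset

lemma pref_sum {α : ℕ → Type*} [∀ j, Fintype (α j)] [∀ j, DecidableEq (α j)]
    (g : ∀ j : ℕ, α j → ℝ) (N n : ℕ) (h : n ≤ N) (u : ∀ j : Fin n, α j) :
    ∑ v ∈ Finset.univ.filter
        (fun v : ∀ j : Fin N, α j => ∀ j : Fin n, v (Fin.castLE h j) = u j),
      ∏ j : Fin N, g j (v j)
    = (∏ j : Fin n, g j (u j)) * ∏ j ∈ Finset.Ico n N, ∑ x : α j, g j x := by
  induction N, h using Nat.le_induction with
  | base =>
    have hfil : Finset.univ.filter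
        (fun v : ∀ j : Fin n, α j => ∀ j : Fin n, v (Fin.castLE le_rfl j) = u j) = {u} := by
      ext v
      simp [funext_iff]
    rw [hfil]
    simp
  | succ N hN ih =>
    rw [Finset.sum_filter] at ih ⊢
    rw [← Equiv.sum_comp (Fin.snocEquiv (fun j : Fin (N+1) => α j))]
    rw [Fintype.sum_prod_type]
    have key : ∀ (x : α N) (v : ∀ j : Fin N, α j),
        (if ∀ j : Fin n, (Fin.snocEquiv (fun j : Fin (N+1) => α j) (x, v))
            (Fin.castLE (Nat.le_succ_of_le hN) j) = u j then
          ∏ j : Fin (N+1), g j ((Fin.snocEquiv (fun j : Fin (N+1) => α j) (x, v)) j) else 0)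
        = (if ∀ j : Fin n, v (Fin.castLE hN j) = u j then ∏ j : Fin N, g j (v j) else 0)
            * g N x := by
      intro x v
      have hcond : (∀ j : Fin n, (Fin.snocEquiv (fun j : Fin (N+1) => α j) (x, v))
            (Fin.castLE (Nat.le_succ_of_le hN) j) = u j)
          ↔ (∀ j : Fin n, v (Fin.castLE hN j) = u j) := by
        apply forall_congr'
        intro j
        rw [show ((Fin.snocEquiv fun j : Fin (N+1) => α ↑j) (x, v))
            (Fin.castLE (Nat.le_succ_of_le hN) j) = v (Fin.castLE hN j) from
          Fin.snoc_castSucc (α := fun j : Fin (N+1) => α ↑j) (p := v) (x := x)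
            (i := Fin.castLE hN j)]
      rw [Fin.prod_univ_castSucc]
      have hlast : (Fin.snocEquiv (fun j : Fin (N+1) => α j) (x, v)) (Fin.last N) = x := by
        simp [Fin.snocEquiv]
      have hcs : ∀ j : Fin N, (Fin.snocEquiv (fun j : Fin (N+1) => α j) (x, v))
          (Fin.castSucc j) = v j := by
        intro j; simp [Fin.snocEquiv]
      simp only [hlast, hcs]
      by_cases hc : ∀ j : Fin n, v (Fin.castLE hN j) = u j
      · rw [if_pos (hcond.mpr hc), if_pos hc]
        simp [Fin.val_last]
      · rw [if_neg (fun hh => hc (hcond.mp hh)), if_neg hc, zero_mul]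
    refine Eq.trans (Finset.sum_congr rfl fun x _ => Finset.sum_congr rfl fun v _ =>
      key x v) ?_
    rw [← Finset.sum_comm]
    simp only [← Finset.mul_sum]
    rw [← Finset.sum_mul]
    have ih' : (∑ i : (i : Fin N) → α ↑i.castSucc,
        if ∀ j : Fin n, i (Fin.castLE hN j) = u j then ∏ j : Fin N, g ↑j (i j) else 0)
        = (∏ j : Fin n, g (↑j) (u j)) * ∏ j ∈ Finset.Ico n N, ∑ x : α j, g j x := ih
    have hC : (∑ i : α ↑(Fin.last N), g N i) = ∑ x : α N, g N x := rfl
    rw [ih', hC, Finset.prod_Ico_succ_top hN]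
    ring

lemma full_sum {α : ℕ → Type*} [∀ j, Fintype (α j)] [∀ j, DecidableEq (α j)]
    (g : ∀ j : ℕ, α j → ℝ) (N : ℕ) :
    ∑ v : ∀ j : Fin N, α j, ∏ j : Fin N, g j (v j)
      = ∏ j ∈ Finset.range N, ∑ x : α j, g j x := by
  have h := pref_sum g N 0 (Nat.zero_le N) (fun j => j.elim0)
  simpa [Nat.Ico_zero_eq_range] using h

/-- Rank uniformization covering lemma (lower bound form): let `{[w_i]}_{i<K}` be a finite
disjoint cover of `Σ_0^∞(m)` by cylinders, with minimal rank `n_min` and maximal rank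
`n_max`, and let `f = (f_k)` be a potential with `f_k(ω) = a_{k,ω_k}` depending only on the
first coordinate. Then for every `s ∈ ℝ` there is `n*` with `n_min ≤ n* ≤ n_max` such that
`∑_i exp(-n(w_i) s + sup_{ω∈[w_i]} S_{n(w_i)}^σ f(ω))
  ≥ ∑_{u ∈ Σ_0^{n*}} exp(-n* s + sup_{ω∈[u]} S_{n*}^σ f(ω))`. -/
theorem stmt16 (m : ℕ → ℕ) (hm : ∀ k, 2 ≤ m k)
    (a : ∀ k : ℕ, Fin (m k) → ℝ)
    (f : ∀ k : ℕ, (∀ i : ℕ, Fin (m (k + i))) → ℝ)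
    (hf : ∀ k ϑ, f k ϑ = a k (ϑ 0))
    (K : ℕ) (hK : 0 < K)
    (w : Fin K → (n : ℕ) × (∀ j : Fin n, Fin (m j)))
    (hcov : ∀ ω : ∀ j : ℕ, Fin (m j), ∃ i : Fin K, ∀ j : Fin (w i).1, ω j = (w i).2 j)
    (hdisj : ∀ i i' : Fin K, i ≠ i' →
      Disjoint {ω : ∀ j : ℕ, Fin (m j) | ∀ j : Fin (w i).1, ω j = (w i).2 j}
        {ω : ∀ j : ℕ, Fin (m j) | ∀ j : Fin (w i').1, ω j = (w i').2 j})
    (s : ℝ) :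
    ∃ nstar : ℕ,
      (Finset.univ.inf' ⟨⟨0, hK⟩, Finset.mem_univ _⟩ fun i : Fin K => (w i).1) ≤ nstar ∧
      nstar ≤ (Finset.univ.sup' ⟨⟨0, hK⟩, Finset.mem_univ _⟩ fun i : Fin K => (w i).1) ∧
      (∑ i : Fin K, Real.exp (-((w i).1 : ℝ) * s +
          sSup ((fun ω : ∀ j : ℕ, Fin (m j) =>
              ∑ j ∈ Finset.range (w i).1, f j (fun t : ℕ => ω (j + t))) ''
            {ω : ∀ j : ℕ, Fin (m j) | ∀ j : Fin (w i).1, ω j = (w i).2 j})))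
        ≥ ∑ u : ∀ j : Fin nstar, Fin (m j), Real.exp (-(nstar : ℝ) * s +
            sSup ((fun ω : ∀ j : ℕ, Fin (m j) =>
                ∑ j ∈ Finset.range nstar, f j (fun t : ℕ => ω (j + t))) ''
              {ω : ∀ j : ℕ, Fin (m j) | ∀ j : Fin nstar, ω j = u j})) := by
  classical
  have hmpos : ∀ k, 0 < m k := fun k => lt_of_lt_of_le two_pos (hm k)
  -- the weights
  set g : ∀ j : ℕ, Fin (m j) → ℝ := fun j x => Real.exp (a j x - s) with hg
  set c : ℕ → ℝ := fun j => ∑ x : Fin (m j), g j x with hc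
  set Z : ℕ → ℝ := fun n => ∏ j ∈ Finset.range n, c j with hZdef
  have hcpos : ∀ j, 0 < c j := by
    intro j
    apply Finset.sum_pos (fun x _ => Real.exp_pos _)
    exact ⟨⟨0, hmpos j⟩, Finset.mem_univ _⟩
  have hZpos : ∀ n, 0 < Z n := fun n => Finset.prod_pos fun j _ => hcpos j
  -- exp of the Birkhoff sum as a product of weights
  have hsum : ∀ (n : ℕ) (u : ∀ j : Fin n, Fin (m j)),
      Real.exp (-(n : ℝ) * s + ∑ j : Fin n, a j (u j)) = ∏ j : Fin n, g j (u j) := by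
    intro n u
    rw [hg]
    rw [← Real.exp_sum]
    congr 1
    rw [Finset.sum_sub_distrib, Finset.sum_const, Finset.card_univ, Fintype.card_fin,
      nsmul_eq_mul]
    ring
  -- the supremum over a cylinder
  have hsup : ∀ (n : ℕ) (u : ∀ j : Fin n, Fin (m j)),
      sSup ((fun ω : ∀ j : ℕ, Fin (m j) =>
          ∑ j ∈ Finset.range n, f j (fun t : ℕ => ω (j + t))) ''
        {ω : ∀ j : ℕ, Fin (m j) | ∀ j : Fin n, ω j = u j})
      = ∑ j : Fin n, a j (u j) := by
    intro n u
    have hval : ∀ ω : ∀ j : ℕ, Fin (m j), (∀ j : Fin n, ω j = u j) →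
        (∑ j ∈ Finset.range n, f j (fun t : ℕ => ω (j + t))) = ∑ j : Fin n, a j (u j) := by
      intro ω hω
      rw [← Fin.sum_univ_eq_sum_range (fun j => f j (fun t : ℕ => ω (j + t))) n]
      refine Finset.sum_congr rfl fun j _ => ?_
      rw [hf]
      exact congrArg (a j) (hω j)
    set ω₀ : ∀ j : ℕ, Fin (m j) := fun j =>
      if h : j < n then u ⟨j, h⟩ else ⟨0, hmpos j⟩ with hω₀def
    have hω₀ : ∀ j : Fin n, ω₀ j = u j := by
      intro j
      simp only [hω₀def, j.isLt, dif_pos]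
    have himg : ((fun ω : ∀ j : ℕ, Fin (m j) =>
          ∑ j ∈ Finset.range n, f j (fun t : ℕ => ω (j + t))) ''
        {ω : ∀ j : ℕ, Fin (m j) | ∀ j : Fin n, ω j = u j})
        = {∑ j : Fin n, a j (u j)} := by
      apply Set.Subset.antisymm
      · rintro x ⟨ω, hω, rfl⟩
        exact hval ω hω
      · rintro x hx
        rw [Set.mem_singleton_iff] at hx
        exact ⟨ω₀, hω₀, (hval ω₀ hω₀).trans hx.symm⟩
    rw [himg, csSup_singleton]
  -- notation for min/max ranks
  set nmin : ℕ := Finset.univ.inf' ⟨⟨0, hK⟩, Finset.mem_univ _⟩ fun i : Fin K => (w i).1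
    with hnmin
  set N : ℕ := Finset.univ.sup' ⟨⟨0, hK⟩, Finset.mem_univ _⟩ fun i : Fin K => (w i).1
    with hN
  have hNi : ∀ i : Fin K, (w i).1 ≤ N := fun i => by
    rw [hN]; exact Finset.le_sup' (f := fun i : Fin K => (w i).1) (Finset.mem_univ i)
  have hnmi : ∀ i : Fin K, nmin ≤ (w i).1 := fun i => by
    rw [hnmin]; exact Finset.inf'_le (f := fun i : Fin K => (w i).1) (Finset.mem_univ i)
  have hminmax : nmin ≤ N := le_trans (hnmi ⟨0, hK⟩) (hNi ⟨0, hK⟩)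
  -- extension of a finite word to an infinite one
  set ext : (∀ j : Fin N, Fin (m j)) → ∀ j : ℕ, Fin (m j) := fun v j =>
    if h : j < N then v ⟨j, h⟩ else ⟨0, hmpos j⟩ with hextdef
  have hext : ∀ (v : ∀ j : Fin N, Fin (m j)) (j : Fin N), ext v j = v j := by
    intro v j
    simp only [hextdef, j.isLt, dif_pos]
  -- the fiber map
  set φ : (∀ j : Fin N, Fin (m j)) → Fin K := fun v => (hcov (ext v)).choose with hφdef
  have hφ : ∀ v, ∀ j : Fin (w (φ v)).1, ext v j = (w (φ v)).2 j :=
    fun v => (hcov (ext v)).choose_spec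
  have hfib : ∀ (i : Fin K) (v : ∀ j : Fin N, Fin (m j)),
      φ v = i ↔ ∀ j : Fin (w i).1, v (Fin.castLE (hNi i) j) = (w i).2 j := by
    intro i v
    constructor
    · rintro rfl
      intro j
      exact (hext v (Fin.castLE (hNi (φ v)) j)).symm.trans (hφ v j)
    · intro h
      by_contra hne
      have h1 : ext v ∈ {ω : ∀ j : ℕ, Fin (m j) | ∀ j : Fin (w i).1, ω j = (w i).2 j} := by
        intro j
        exact (hext v (Fin.castLE (hNi i) j)).trans (h j)
      have h2 : ext v ∈
          {ω : ∀ j : ℕ, Fin (m j) | ∀ j : Fin (w (φ v)).1, ω j = (w (φ v)).2 j} := hφ v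
      exact Set.disjoint_left.mp (hdisj i (φ v) (fun he => hne he.symm)) h1 h2
  -- the key identity
  have hkey : Z N = ∑ i : Fin K,
      (∏ j : Fin (w i).1, g j ((w i).2 j)) * ∏ j ∈ Finset.Ico (w i).1 N, c j := by
    have hfull : Z N = ∑ v : ∀ j : Fin N, Fin (m j), ∏ j : Fin N, g j (v j) :=
      (full_sum g N).symm
    rw [hfull]
    rw [← Finset.sum_fiberwise_of_maps_to (g := φ) (fun v _ => Finset.mem_univ (φ v))]
    refine Finset.sum_congr rfl fun i _ => ?_
    rw [show Finset.univ.filter (fun v => φ v = i)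
        = Finset.univ.filter (fun v : ∀ j : Fin N, Fin (m j) =>
            ∀ j : Fin (w i).1, v (Fin.castLE (hNi i) j) = (w i).2 j) from
      Finset.filter_congr fun v _ => by simp [hfib i v]]
    exact pref_sum g N (w i).1 (hNi i) (w i).2
  -- choose nstar minimizing Z on [nmin, N]
  obtain ⟨nstar, hns, hmin⟩ := Finset.exists_min_image (Finset.Icc nmin N) Z
    ⟨nmin, Finset.mem_Icc.mpr ⟨le_rfl, hminmax⟩⟩
  rw [Finset.mem_Icc] at hns
  refine ⟨nstar, hns.1, hns.2, ?_⟩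
  -- rewrite both sides
  simp only [hsup, hsum]
  have hgoal : (∑ u : ∀ j : Fin nstar, Fin (m j), ∏ j : Fin nstar, g j (u j))
      = Z nstar := full_sum g nstar
  rw [hgoal]
  -- now prove  ∑ i, W i ≥ Z nstar
  have hWnn : ∀ i : Fin K, 0 ≤ ∏ j : Fin (w i).1, g j ((w i).2 j) :=
    fun i => Finset.prod_nonneg fun j _ => (Real.exp_pos _).le
  have hQnn : ∀ i : Fin K, 0 ≤ ∏ j ∈ Finset.Ico (w i).1 N, c j :=
    fun i => Finset.prod_nonneg fun j _ => (hcpos j).le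
  have hsplit : ∀ i : Fin K, Z (w i).1 * ∏ j ∈ Finset.Ico (w i).1 N, c j = Z N := by
    intro i
    exact Finset.prod_range_mul_prod_Ico c (hNi i)
  have hZle : ∀ i : Fin K, Z nstar ≤ Z (w i).1 := by
    intro i
    exact hmin _ (Finset.mem_Icc.mpr ⟨hnmi i, hNi i⟩)
  have hmain : (∑ i : Fin K, ∏ j : Fin (w i).1, g j ((w i).2 j)) * Z N ≥ Z nstar * Z N := by
    calc (∑ i : Fin K, ∏ j : Fin (w i).1, g j ((w i).2 j)) * Z N
        = ∑ i : Fin K, (∏ j : Fin (w i).1, g j ((w i).2 j)) * Z N := by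
          rw [Finset.sum_mul]
      _ ≥ ∑ i : Fin K, (∏ j : Fin (w i).1, g j ((w i).2 j)) *
            (Z nstar * ∏ j ∈ Finset.Ico (w i).1 N, c j) := by
          refine Finset.sum_le_sum fun i _ => ?_
          refine mul_le_mul_of_nonneg_left ?_ (hWnn i)
          rw [← hsplit i]
          exact mul_le_mul_of_nonneg_right (hZle i) (hQnn i)
      _ = Z nstar * ∑ i : Fin K,
            (∏ j : Fin (w i).1, g j ((w i).2 j)) * ∏ j ∈ Finset.Ico (w i).1 N, c j := by
          rw [Finset.mul_sum]
          exact Finset.sum_congr rfl fun i _ => by ring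
      _ = Z nstar * Z N := by rw [← hkey]
  exact le_of_mul_le_mul_right hmain (hZpos N)
end
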